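/- Let ξ = (ξ₁,…,ξ_d) be a ℕ^d-valued random vector which, conditionally on a nonnegative random vector ζ = (ζ₁,…,ζ_d), has independent Poisson(ζ_i) coordinates. If ζ is strictly α-stable (t^{1/α}ζ' + (1-t)^{1/α}ζ'' =_d ζ for all t ∈ [0,1], independent copies), then ξ is discrete α-stable: t^{1/α}∘ξ' + (1-t)^{1/α}∘ξ'' =_d ξ for all t ∈ [0,1], where ∘ denotes coordinatewise independent binomial thinning. -/

import Mathlib

open scoped ENNReal NNReal
open MeasureTheory ProbabilityTheory

/-- Bernoulli(t) distribution as a `PMF` on `ℕ`. -/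
noncomputable def bernNat (t : ℝ) : PMF ℕ :=
  (PMF.bernoulli (min (Real.toNNReal t) 1) (min_le_right _ _)).map (fun b => if b then 1 else 0)

/-- Distribution of the sum of two independent `ℕ`-valued random variables. -/
noncomputable def pmfConvN (p q : PMF ℕ) : PMF ℕ := p.bind fun a => q.map fun b => a + b

/-- Distribution of the sum of `n` i.i.d. Bernoulli(t) random variables. -/
noncomputable def bernSum (t : ℝ) : ℕ → PMF ℕ
  | 0 => PMF.pure 0
  | n + 1 => pmfConvN (bernSum t n) (bernNat t)

/-- Product of independent `ℕ`-valued distributions indexed by `Fin d`. -/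
noncomputable def piPMF : {d : ℕ} → (Fin d → PMF ℕ) → PMF (Fin d → ℕ)
  | 0, _ => PMF.pure (fun i => i.elim0)
  | _ + 1, ps => (ps 0).bind fun a => (piPMF fun i => ps i.succ).map (Fin.cons a)

/-- Coordinatewise independent binomial thinning of a random vector in `ℕ^d`. -/
noncomputable def pmfThinVec {d : ℕ} (t : ℝ) (P : PMF (Fin d → ℕ)) : PMF (Fin d → ℕ) :=
  P.bind fun f => piPMF fun i => bernSum t (f i)

/-- Distribution of the sum of two independent `ℕ^d`-valued random vectors. -/
noncomputable def pmfConvVec {d : ℕ} (P Q : PMF (Fin d → ℕ)) : PMF (Fin d → ℕ) :=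
  P.bind fun a => Q.map fun b => a + b

lemma bernNat_apply (t : ℝ) (ht0 : 0 ≤ t) (ht1 : t ≤ 1) (k : ℕ) :
    bernNat t k = if k = 0 then ENNReal.ofReal (1 - t) else if k = 1 then ENNReal.ofReal t
      else 0 := by
  have hle : Real.toNNReal t ≤ 1 := Real.toNNReal_le_one.2 ht1
  have hmin : min (Real.toNNReal t) 1 = Real.toNNReal t := min_eq_left hle
  have hofr : ((Real.toNNReal t : ℝ≥0) : ℝ≥0∞) = ENNReal.ofReal t := rfl
  have hsub : (1 : ℝ≥0∞) - ENNReal.ofReal t = ENNReal.ofReal (1 - t) := by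
    rw [ENNReal.ofReal_sub _ ht0, ENNReal.ofReal_one]
  unfold bernNat
  rw [PMF.map_apply]
  rw [tsum_bool]
  simp only [PMF.bernoulli_apply, hmin, Bool.cond_false, Bool.cond_true, if_true, if_false]
  rcases k with _ | _ | k <;> simp [hsub, hofr]

lemma pmfConvN_apply (P Q : PMF ℕ) (k : ℕ) :
    pmfConvN P Q k = ∑ a ∈ Finset.range (k+1), P a * Q (k - a) := by
  unfold pmfConvN
  rw [PMF.bind_apply]
  have h1 : ∀ a : ℕ, (Q.map fun b => a + b) k = if a ≤ k then Q (k - a) else 0 := by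
    intro a
    rw [PMF.map_apply]
    by_cases h : a ≤ k
    · rw [if_pos h]
      rw [tsum_eq_single (k - a)]
      · rw [if_pos (by omega)]
      · intro b hb
        rw [if_neg (by omega)]
    · rw [if_neg h]
      rw [tsum_eq_single 0]
      · rw [if_neg (by omega)]
      · intro b hb
        rw [if_neg (by omega)]
  simp_rw [h1]
  rw [tsum_eq_sum (s := Finset.range (k+1)) (by
    intro a ha
    rw [if_neg (by simpa using ha), mul_zero])]
  refine Finset.sum_congr rfl fun a ha => ?_
  rw [if_pos (by simpa using Nat.lt_succ_iff.mp (Finset.mem_range.mp ha))]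

lemma bernSum_apply (t : ℝ) (ht0 : 0 ≤ t) (ht1 : t ≤ 1) (n k : ℕ) :
    bernSum t n k = (n.choose k : ℝ≥0∞) * ENNReal.ofReal t ^ k
      * ENNReal.ofReal (1 - t) ^ (n - k) := by
  induction n generalizing k with
  | zero =>
    rcases k with _ | k <;> simp [bernSum, PMF.pure_apply]
  | succ n ih =>
    show pmfConvN (bernSum t n) (bernNat t) k = _
    rw [pmfConvN_apply]
    simp_rw [ih, bernNat_apply t ht0 ht1]
    rcases k with _ | k
    · simp [pow_succ, mul_assoc]
    · rw [Finset.sum_range_succ, Finset.sum_range_succ]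
      have hrest : ∑ a ∈ Finset.range k,
          (n.choose a : ℝ≥0∞) * ENNReal.ofReal t ^ a * ENNReal.ofReal (1 - t) ^ (n - a) *
            (if k + 1 - a = 0 then ENNReal.ofReal (1 - t) else
              if k + 1 - a = 1 then ENNReal.ofReal t else 0) = 0 := by
        refine Finset.sum_eq_zero fun a ha => ?_
        have := Finset.mem_range.mp ha
        rw [if_neg (by omega), if_neg (by omega), mul_zero]
      rw [hrest, zero_add]
      rw [if_neg (by omega), if_pos (by omega), if_pos (by omega)]
      by_cases hk : k + 1 ≤ n
      · have h2 : n + 1 - (k + 1) = n - k := by omega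
        have h1 : n - k = (n - (k+1)) + 1 := by omega
        simp only [Nat.choose_succ_succ, h2, h1, pow_succ]
        push_cast
        ring
      · have hc1 : n.choose (k+1) = 0 := Nat.choose_eq_zero_of_lt (by omega)
        by_cases hk2 : k ≤ n
        · have hkn : k = n := by omega
          subst hkn
          simp [hc1, Nat.choose_self, pow_succ]
        · have hc2 : n.choose k = 0 := Nat.choose_eq_zero_of_lt (by omega)
          have hc3 : (n+1).choose (k+1) = 0 := Nat.choose_eq_zero_of_lt (by omega)
          simp [hc1, hc2, hc3]

lemma piPMF_apply : ∀ {d : ℕ} (ps : Fin d → PMF ℕ) (g : Fin d → ℕ),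
    piPMF ps g = ∏ i, ps i (g i)
  | 0, ps, g => by
    simp only [piPMF, PMF.pure_apply, Finset.univ_eq_empty, Finset.prod_empty]
    rw [if_pos (funext fun i => i.elim0)]
  | d + 1, ps, g => by
    show ((ps 0).bind fun a => (piPMF fun i => ps i.succ).map (Fin.cons a)) g = _
    rw [PMF.bind_apply]
    have h1 : ∀ a : ℕ, ((piPMF fun i => ps i.succ).map (Fin.cons a)) g
        = if a = g 0 then (piPMF fun i => ps i.succ) (Fin.tail g) else 0 := by
      intro a
      rw [PMF.map_apply]
      by_cases h : a = g 0
      · subst h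
        rw [if_pos rfl, tsum_eq_single (Fin.tail g)]
        · rw [if_pos (Fin.cons_self_tail g).symm]
        · intro h hh
          rw [if_neg]
          intro hc
          exact hh (by rw [hc, Fin.tail_cons])
      · rw [if_neg h]
        refine ENNReal.tsum_eq_zero.2 fun f => ?_
        rw [if_neg]
        intro hc
        exact h (by rw [hc, Fin.cons_zero])
    simp_rw [h1]
    rw [tsum_eq_single (g 0) (by intro a ha; rw [if_neg ha, mul_zero]), if_pos rfl]
    rw [piPMF_apply (fun i => ps i.succ) (Fin.tail g), Fin.prod_univ_succ]
    rfl

lemma tsum_pi_prod : ∀ {d : ℕ} {β : Type} [Countable β] (g : Fin d → β → ℝ≥0∞),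
    ∑' f : Fin d → β, ∏ i, g i (f i) = ∏ i, ∑' b, g i b
  | 0, β, _, g => by
    simp only [Finset.univ_eq_empty, Finset.prod_empty]
    have : Unique (Fin 0 → β) := ⟨⟨fun i => i.elim0⟩, fun f => funext fun i => i.elim0⟩
    rw [tsum_eq_single (fun i => i.elim0) (fun f hf => absurd (Subsingleton.elim _ _) hf)]
  | d + 1, β, _, g => by
    rw [← (Fin.consEquiv fun _ : Fin (d+1) => β).tsum_eq, ENNReal.tsum_prod']
    have h1 : ∀ (a : β) (f : Fin d → β),
        ∏ i, g i ((Fin.consEquiv fun _ : Fin (d+1) => β) (a, f) i)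
          = g 0 a * ∏ i, g i.succ (f i) := by
      intro a f
      simp only [Fin.consEquiv_apply]
      rw [Fin.prod_univ_succ]
      simp
    simp_rw [h1, ENNReal.tsum_mul_left, tsum_pi_prod (fun i => g i.succ),
      ENNReal.tsum_mul_right]
    rw [Fin.prod_univ_succ]

noncomputable def pE (r : ℝ) (n : ℕ) : ℝ≥0∞ := ENNReal.ofReal (r ^ n * Real.exp (-r) / (Nat.factorial n : ℝ))

lemma exp_hasSum (x : ℝ) : HasSum (fun n : ℕ => x ^ n / (Nat.factorial n : ℝ)) (Real.exp x) := by
  rw [Real.exp_eq_exp_ℝ]; exact NormedSpace.expSeries_div_hasSum_exp x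

lemma pow_div_factorial_le_exp {x : ℝ} (hx : 0 ≤ x) (n : ℕ) : x ^ n / (Nat.factorial n : ℝ) ≤ Real.exp x :=
  le_hasSum (exp_hasSum x) n (fun m _ => by positivity)

lemma pE_thin (r t : ℝ) (hr : 0 ≤ r) (ht0 : 0 ≤ t) (ht1 : t ≤ 1) (k : ℕ) :
    ∑' n, pE r n * bernSum t n k = pE (t * r) k := by
  have hq : (0:ℝ) ≤ 1 - t := by linarith
  simp_rw [bernSum_apply t ht0 ht1]
  set F : ℕ → ℝ≥0∞ := fun n => pE r n * ((n.choose k : ℝ≥0∞) * ENNReal.ofReal t ^ k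
      * ENNReal.ofReal (1 - t) ^ (n - k)) with hF
  have hsupp : Function.support F ⊆ Set.range (fun m : ℕ => m + k) := by
    intro n hn
    rcases le_or_gt k n with h | h
    · exact ⟨n - k, by show n - k + k = n; omega⟩
    · exfalso; apply hn; simp [hF, Nat.choose_eq_zero_of_lt h]
  rw [← Function.Injective.tsum_eq (add_left_injective k) hsupp]
  have hterm : ∀ m : ℕ, F (m + k) = ENNReal.ofReal
      ((r ^ (m + k) * Real.exp (-r) / (Nat.factorial (m + k) : ℝ)) * (((m+k).choose k : ℝ) * (t ^ k * (1-t) ^ m))) := by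
    intro m
    rw [hF]
    simp only [pE, Nat.add_sub_cancel]
    rw [← ENNReal.ofReal_pow ht0, ← ENNReal.ofReal_pow hq, ← ENNReal.ofReal_natCast,
      ← ENNReal.ofReal_mul (by positivity), ← ENNReal.ofReal_mul (by positivity),
      ← ENNReal.ofReal_mul (by positivity)]
    congr 1
    ring
  have hgA : ∀ m : ℕ, (r ^ (m + k) * Real.exp (-r) / (Nat.factorial (m + k) : ℝ))
        * (((m+k).choose k : ℝ) * (t ^ k * (1-t) ^ m))
      = ((t*r) ^ k * Real.exp (-(t*r)) / (Nat.factorial k : ℝ)) * (((1-t)*r) ^ m / (Nat.factorial m : ℝ) * Real.exp (-((1-t)*r))) := by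
    intro m
    have hfac : (((m+k).choose k : ℝ)) * ((Nat.factorial k : ℝ) : ℝ) * ((Nat.factorial m : ℝ) : ℝ) = (Nat.factorial (m+k) : ℝ) := by
      have := Nat.choose_mul_factorial_mul_factorial (Nat.le_add_left k m)
      rw [Nat.add_sub_cancel] at this
      exact_mod_cast this
    have hexp : Real.exp (-r) = Real.exp (-(t*r)) * Real.exp (-((1-t)*r)) := by
      rw [← Real.exp_add]; congr 1; ring
    rw [hexp, pow_add, mul_pow, mul_pow]
    have h1 : (Nat.factorial (m+k) : ℝ) ≠ 0 := Nat.cast_ne_zero.2 (Nat.factorial_ne_zero _)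
    have h2 : ((Nat.factorial k : ℝ) : ℝ) ≠ 0 := Nat.cast_ne_zero.2 (Nat.factorial_ne_zero _)
    have h3 : ((Nat.factorial m : ℝ) : ℝ) ≠ 0 := Nat.cast_ne_zero.2 (Nat.factorial_ne_zero _)
    field_simp
    linear_combination (r ^ m * r ^ k
      * t ^ k * (1-t) ^ m) * hfac
  have hsum : ∑' m : ℕ, ENNReal.ofReal (((t*r) ^ k * Real.exp (-(t*r)) / (Nat.factorial k : ℝ))
      * (((1-t)*r) ^ m / (Nat.factorial m : ℝ) * Real.exp (-((1-t)*r))))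
      = ENNReal.ofReal ((t*r) ^ k * Real.exp (-(t*r)) / (Nat.factorial k : ℝ)) := by
    rw [← ENNReal.ofReal_tsum_of_nonneg (fun m => by positivity)
      (((Real.summable_pow_div_factorial _).mul_right _).mul_left _)]
    congr 1
    rw [tsum_mul_left, tsum_mul_right, (exp_hasSum _).tsum_eq, ← Real.exp_add]
    simp
  have hall : ∀ m : ℕ, F (m + k) = ENNReal.ofReal (((t*r) ^ k * Real.exp (-(t*r)) / (Nat.factorial k : ℝ))
      * ((((1-t)*r) ^ m / (Nat.factorial m : ℝ)) * Real.exp (-((1-t)*r)))) :=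
    fun m => (hterm m).trans (congrArg _ (hgA m))
  rw [tsum_congr hall, hsum]
  rfl

lemma pE_conv (u v : ℝ) (hu : 0 ≤ u) (hv : 0 ≤ v) (m : ℕ) :
    ∑' jk : ℕ × ℕ, (if m = jk.1 + jk.2 then pE u jk.1 * pE v jk.2 else 0)
      = pE (u + v) m := by
  rw [tsum_eq_sum (s := Finset.HasAntidiagonal.antidiagonal m) (by
    intro jk hjk
    rw [if_neg (by simpa [eq_comm] using (Finset.HasAntidiagonal.mem_antidiagonal.not.mp hjk))])]
  have hterm : ∀ jk ∈ Finset.HasAntidiagonal.antidiagonal m,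
      (if m = jk.1 + jk.2 then pE u jk.1 * pE v jk.2 else 0)
        = ENNReal.ofReal ((u ^ jk.1 * Real.exp (-u) / (Nat.factorial jk.1 : ℝ))
          * (v ^ jk.2 * Real.exp (-v) / (Nat.factorial jk.2 : ℝ))) := by
    intro jk hjk
    rw [if_pos (Finset.HasAntidiagonal.mem_antidiagonal.mp hjk).symm, pE, pE,
      ← ENNReal.ofReal_mul (by positivity)]
  rw [Finset.sum_congr rfl hterm, ← ENNReal.ofReal_sum_of_nonneg (fun jk _ => by positivity)]
  unfold pE
  congr 1
  rw [Finset.Nat.sum_antidiagonal_eq_sum_range_succ_mk]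
  have hexp : Real.exp (-(u+v)) = Real.exp (-u) * Real.exp (-v) := by
    rw [← Real.exp_add]; congr 1; ring
  rw [add_pow, hexp, Finset.sum_mul, Finset.sum_div]
  refine Finset.sum_congr rfl fun j hj => ?_
  show u ^ j * Real.exp (-u) / (Nat.factorial j : ℝ)
      * (v ^ (m - j) * Real.exp (-v) / (Nat.factorial (m - j) : ℝ)) = _
  have hjm : j ≤ m := Nat.lt_succ_iff.mp (Finset.mem_range.mp hj)
  have hfac : ((m.choose j : ℝ)) * ((Nat.factorial j : ℝ) : ℝ) * ((Nat.factorial (m - j) : ℝ) : ℝ) = ((Nat.factorial m : ℝ) : ℝ) := by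
    exact_mod_cast Nat.choose_mul_factorial_mul_factorial hjm
  have h1 : ((Nat.factorial m : ℝ) : ℝ) ≠ 0 := Nat.cast_ne_zero.2 (Nat.factorial_ne_zero _)
  have h2 : ((Nat.factorial j : ℝ) : ℝ) ≠ 0 := Nat.cast_ne_zero.2 (Nat.factorial_ne_zero _)
  have h3 : ((Nat.factorial (m - j) : ℝ) : ℝ) ≠ 0 := Nat.cast_ne_zero.2 (Nat.factorial_ne_zero _)
  field_simp
  linear_combination (-(u ^ j * v ^ (m - j))) * hfac

lemma pmfThinVec_apply {d : ℕ} (t : ℝ) (P : PMF (Fin d → ℕ)) (g : Fin d → ℕ) :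
    pmfThinVec t P g = ∑' f, P f * ∏ i, bernSum t (f i) (g i) := by
  unfold pmfThinVec
  rw [PMF.bind_apply]
  exact tsum_congr fun f => by rw [piPMF_apply]

lemma pmfConvVec_apply {d : ℕ} (P Q : PMF (Fin d → ℕ)) (g : Fin d → ℕ) :
    pmfConvVec P Q g
      = ∑' p : (Fin d → ℕ) × (Fin d → ℕ), (if g = p.1 + p.2 then P p.1 * Q p.2 else 0) := by
  unfold pmfConvVec
  rw [PMF.bind_apply, ENNReal.tsum_prod']
  refine tsum_congr fun a => ?_
  rw [PMF.map_apply, ← ENNReal.tsum_mul_left]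
  refine tsum_congr fun b => ?_
  by_cases h : g = a + b
  · rw [if_pos h, if_pos h]
  · rw [if_neg h, if_neg h, mul_zero]

lemma measurable_pE_comp {α : Type*} [MeasurableSpace α] {f : α → ℝ} (hf : Measurable f)
    (n : ℕ) : Measurable fun a => pE (f a) n := by
  apply ENNReal.measurable_ofReal.comp
  fun_prop

lemma poisson_real_nonneg {x : ℝ} (hx : 0 ≤ x) (n : ℕ) :
    0 ≤ x ^ n * Real.exp (-x) / (Nat.factorial n : ℝ) :=
  div_nonneg (mul_nonneg (pow_nonneg hx n) (Real.exp_pos _).le) (Nat.cast_nonneg _)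

lemma poisson_real_le_one {x : ℝ} (hx : 0 ≤ x) (n : ℕ) :
    x ^ n * Real.exp (-x) / (Nat.factorial n : ℝ) ≤ 1 := by
  have h1 : x ^ n * Real.exp (-x) / (Nat.factorial n : ℝ)
      = x ^ n / (Nat.factorial n : ℝ) * Real.exp (-x) := by ring
  rw [h1]
  calc x ^ n / (Nat.factorial n : ℝ) * Real.exp (-x)
      ≤ Real.exp x * Real.exp (-x) :=
        mul_le_mul_of_nonneg_right (pow_div_factorial_le_exp hx n) (Real.exp_nonneg _)
    _ = 1 := by rw [← Real.exp_add]; simp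

/-- If `ξ` is, conditionally on a nonnegative random vector `ζ` with law `ν`, a vector of
independent Poisson(ζ_i) coordinates, and `ζ` is strictly `α`-stable, then `ξ` is discrete
`α`-stable: `t^{1/α} ∘ ξ' + (1-t)^{1/α} ∘ ξ'' =_d ξ` for all `t ∈ [0,1]`, where `∘` is
coordinatewise independent binomial thinning. -/
theorem mixed_poisson_of_stable_is_discrete_stable {d : ℕ} (α : ℝ) (hα0 : 0 < α) (hα1 : α ≤ 1)
    (ν : Measure (Fin d → ℝ)) [IsProbabilityMeasure ν]
    (hνnn : ν {x | ¬ ∀ i, 0 ≤ x i} = 0)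
    (ξ : PMF (Fin d → ℕ))
    (hmixed : ∀ f : Fin d → ℕ,
      (ξ f).toReal = ∫ x, ∏ i, (x i ^ f i * Real.exp (-(x i)) / ((f i).factorial : ℝ)) ∂ν)
    (hstable : ∀ t : ℝ, 0 ≤ t → t ≤ 1 →
      Measure.map (fun q : (Fin d → ℝ) × (Fin d → ℝ) =>
          t ^ (1/α) • q.1 + (1 - t) ^ (1/α) • q.2) (ν.prod ν) = ν) :
    ∀ t : ℝ, 0 ≤ t → t ≤ 1 →
      pmfConvVec (pmfThinVec (t ^ (1/α)) ξ) (pmfThinVec ((1 - t) ^ (1/α)) ξ) = ξ := by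
  have haeS : ∀ᵐ x ∂ν, ∀ i, 0 ≤ x i := ae_iff.mpr hνnn
  -- integral representation of ξ
  have hξint : ∀ f : Fin d → ℕ, ξ f = ∫⁻ x, ∏ i, pE (x i) (f i) ∂ν := by
    intro f
    have hGmeas : Measurable fun x : Fin d → ℝ =>
        ∏ i, (x i ^ f i * Real.exp (-(x i)) / ((f i).factorial : ℝ)) := by
      refine Finset.measurable_prod _ fun i _ => ?_
      fun_prop
    have hGnn : 0 ≤ᵐ[ν] fun x : Fin d → ℝ =>
        ∏ i, (x i ^ f i * Real.exp (-(x i)) / ((f i).factorial : ℝ)) := by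
      filter_upwards [haeS] with x hx
      exact Finset.prod_nonneg fun i _ => poisson_real_nonneg (hx i) _
    have hGbd : ∀ᵐ x ∂ν, ‖∏ i, (x i ^ f i * Real.exp (-(x i)) / ((f i).factorial : ℝ))‖
        ≤ 1 := by
      filter_upwards [haeS] with x hx
      rw [Real.norm_eq_abs,
        abs_of_nonneg (Finset.prod_nonneg fun i _ => poisson_real_nonneg (hx i) _)]
      exact Finset.prod_le_one (fun i _ => poisson_real_nonneg (hx i) _)
        (fun i _ => poisson_real_le_one (hx i) _)
    have hInt : Integrable
        (fun x : Fin d → ℝ => ∏ i, (x i ^ f i * Real.exp (-(x i)) / ((f i).factorial : ℝ))) ν :=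
      (integrable_const (1:ℝ)).mono' hGmeas.aestronglyMeasurable hGbd
    have h1 : ξ f = ENNReal.ofReal ((ξ f).toReal) := (ENNReal.ofReal_toReal (ξ.apply_ne_top f)).symm
    rw [h1, hmixed f, MeasureTheory.ofReal_integral_eq_lintegral_ofReal hInt hGnn]
    refine lintegral_congr_ae ?_
    filter_upwards [haeS] with x hx
    rw [ENNReal.ofReal_prod_of_nonneg (fun i _ => poisson_real_nonneg (hx i) _)]
    rfl
  -- integral representation of the thinned pmf
  have hthin : ∀ s : ℝ, 0 ≤ s → s ≤ 1 → ∀ g : Fin d → ℕ,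
      pmfThinVec s ξ g = ∫⁻ x, ∏ i, pE (s * x i) (g i) ∂ν := by
    intro s hs0 hs1 g
    rw [pmfThinVec_apply]
    have h1 : ∀ f : Fin d → ℕ, ξ f * ∏ i, bernSum s (f i) (g i)
        = ∫⁻ x, (∏ i, pE (x i) (f i)) * ∏ i, bernSum s (f i) (g i) ∂ν := by
      intro f
      rw [hξint f, ← lintegral_mul_const]
      exact Finset.measurable_prod _ fun i _ => measurable_pE_comp (measurable_pi_apply i) _
    rw [tsum_congr h1, ← lintegral_tsum (fun f =>
      ((Finset.measurable_prod _ fun i _ =>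
        measurable_pE_comp (measurable_pi_apply i) _).mul_const _).aemeasurable)]
    refine lintegral_congr_ae ?_
    filter_upwards [haeS] with x hx
    calc ∑' f : Fin d → ℕ, (∏ i, pE (x i) (f i)) * ∏ i, bernSum s (f i) (g i)
        = ∑' f : Fin d → ℕ, ∏ i, (pE (x i) (f i) * bernSum s (f i) (g i)) :=
          tsum_congr fun f => (Finset.prod_mul_distrib).symm
      _ = ∏ i, ∑' n : ℕ, pE (x i) n * bernSum s n (g i) :=
          tsum_pi_prod fun i n => pE (x i) n * bernSum s n (g i)
      _ = ∏ i, pE (s * x i) (g i) :=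
          Finset.prod_congr rfl fun i _ => pE_thin (x i) s (hx i) hs0 hs1 (g i)
  intro t ht0 ht1
  set s : ℝ := t ^ (1/α) with hs
  set s' : ℝ := (1 - t) ^ (1/α) with hs'
  have hα : 0 ≤ 1/α := by positivity
  have hs0 : 0 ≤ s := Real.rpow_nonneg ht0 _
  have hs1 : s ≤ 1 := Real.rpow_le_one ht0 ht1 hα
  have hs'0 : 0 ≤ s' := Real.rpow_nonneg (by linarith) _
  have hs'1 : s' ≤ 1 := Real.rpow_le_one (by linarith) (by linarith) hα
  have hA : ∀ (u : ℝ) (a : Fin d → ℕ),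
      Measurable fun x : Fin d → ℝ => ∏ i, pE (u * x i) (a i) :=
    fun u a => Finset.measurable_prod _ fun i _ =>
      measurable_pE_comp (by fun_prop) _
  ext g
  rw [pmfConvVec_apply]
  have hterm : ∀ p : (Fin d → ℕ) × (Fin d → ℕ),
      (if g = p.1 + p.2 then pmfThinVec s ξ p.1 * pmfThinVec s' ξ p.2 else 0)
      = ∫⁻ q : (Fin d → ℝ) × (Fin d → ℝ),
          (if g = p.1 + p.2 then
            (∏ i, pE (s * q.1 i) (p.1 i)) * ∏ i, pE (s' * q.2 i) (p.2 i) else 0)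
          ∂(ν.prod ν) := by
    intro p
    by_cases h : g = p.1 + p.2
    · simp only [if_pos h]
      rw [hthin s hs0 hs1, hthin s' hs'0 hs'1,
        ← MeasureTheory.lintegral_prod_mul (hA s p.1).aemeasurable (hA s' p.2).aemeasurable]
    · simp only [if_neg h, lintegral_zero]
  rw [tsum_congr hterm, ← lintegral_tsum (fun p => ?_)]
  swap
  · by_cases h : g = p.1 + p.2
    · simp only [if_pos h]
      exact (((hA s p.1).comp measurable_fst).mul ((hA s' p.2).comp measurable_snd)).aemeasurable
    · simp only [if_neg h]
      exact aemeasurable_const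
  have haeP : ∀ᵐ q ∂(ν.prod ν), (∀ i, 0 ≤ q.1 i) ∧ (∀ i, 0 ≤ q.2 i) := by
    have h1 : ∀ᵐ q ∂(ν.prod ν), ∀ i, 0 ≤ q.1 i := by
      rw [ae_iff]
      have he : {q : (Fin d → ℝ) × (Fin d → ℝ) | ¬ ∀ i, 0 ≤ q.1 i}
          = {x : Fin d → ℝ | ¬ ∀ i, 0 ≤ x i} ×ˢ (Set.univ : Set (Fin d → ℝ)) := by
        ext q; simp [Set.mem_prod]
      rw [he, Measure.prod_prod, hνnn, zero_mul]
    have h2 : ∀ᵐ q ∂(ν.prod ν), ∀ i, 0 ≤ q.2 i := by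
      rw [ae_iff]
      have he : {q : (Fin d → ℝ) × (Fin d → ℝ) | ¬ ∀ i, 0 ≤ q.2 i}
          = (Set.univ : Set (Fin d → ℝ)) ×ˢ {x : Fin d → ℝ | ¬ ∀ i, 0 ≤ x i} := by
        ext q; simp [Set.mem_prod]
      rw [he, Measure.prod_prod, hνnn, mul_zero]
    exact h1.and h2
  have hpoint : ∀ q : (Fin d → ℝ) × (Fin d → ℝ), (∀ i, 0 ≤ q.1 i) → (∀ i, 0 ≤ q.2 i) →
      (∑' p : (Fin d → ℕ) × (Fin d → ℕ), (if g = p.1 + p.2 then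
          (∏ i, pE (s * q.1 i) (p.1 i)) * ∏ i, pE (s' * q.2 i) (p.2 i) else 0))
      = ∏ i, pE (s * q.1 i + s' * q.2 i) (g i) := by
    intro q h1 h2
    rw [← (Equiv.arrowProdEquivProdArrow (Fin d) (fun _ => ℕ) (fun _ => ℕ)).tsum_eq]
    have hsummand : ∀ F : Fin d → ℕ × ℕ,
        (if g = (fun i => (F i).1) + (fun i => (F i).2) then
          (∏ i, pE (s * q.1 i) ((F i).1)) * ∏ i, pE (s' * q.2 i) ((F i).2) else 0)
        = ∏ i, (if g i = (F i).1 + (F i).2 then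
            pE (s * q.1 i) (F i).1 * pE (s' * q.2 i) (F i).2 else 0) := by
      intro F
      rw [← Finset.prod_mul_distrib]
      have hc : (g = (fun i => (F i).1) + (fun i => (F i).2)) ↔ ∀ i, g i = (F i).1 + (F i).2 := by
        rw [funext_iff]; rfl
      by_cases h : ∀ i, g i = (F i).1 + (F i).2
      · rw [if_pos (hc.mpr h)]
        exact Finset.prod_congr rfl fun i _ => (if_pos (h i)).symm
      · rw [if_neg (fun hh => h (hc.mp hh))]
        push_neg at h; obtain ⟨i, hi⟩ := h
        refine (Finset.prod_eq_zero (Finset.mem_univ i) ?_).symm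
        rw [if_neg hi]
    calc ∑' F : Fin d → ℕ × ℕ,
          (if g = (fun i => (F i).1) + (fun i => (F i).2) then
            (∏ i, pE (s * q.1 i) ((F i).1)) * ∏ i, pE (s' * q.2 i) ((F i).2) else 0)
        = ∑' F : Fin d → ℕ × ℕ, ∏ i, (if g i = (F i).1 + (F i).2 then
            pE (s * q.1 i) (F i).1 * pE (s' * q.2 i) (F i).2 else 0) := tsum_congr hsummand
      _ = ∏ i, ∑' jk : ℕ × ℕ, (if g i = jk.1 + jk.2 then
            pE (s * q.1 i) jk.1 * pE (s' * q.2 i) jk.2 else 0) :=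
          tsum_pi_prod fun i (jk : ℕ × ℕ) => if g i = jk.1 + jk.2 then
            pE (s * q.1 i) jk.1 * pE (s' * q.2 i) jk.2 else 0
      _ = ∏ i, pE (s * q.1 i + s' * q.2 i) (g i) :=
          Finset.prod_congr rfl fun i _ =>
            pE_conv _ _ (mul_nonneg hs0 (h1 i)) (mul_nonneg hs'0 (h2 i)) (g i)
  rw [lintegral_congr_ae (by filter_upwards [haeP] with q hq using hpoint q hq.1 hq.2)]
  have hΦ : Measurable fun z : Fin d → ℝ => ∏ i, pE (z i) (g i) :=
    Finset.measurable_prod _ fun i _ => measurable_pE_comp (measurable_pi_apply i) _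
  have hT : Measurable fun q : (Fin d → ℝ) × (Fin d → ℝ) => s • q.1 + s' • q.2 :=
    (measurable_fst.const_smul s).add (measurable_snd.const_smul s')
  have hmap : ∫⁻ z, (∏ i, pE (z i) (g i))
        ∂(Measure.map (fun q : (Fin d → ℝ) × (Fin d → ℝ) => s • q.1 + s' • q.2) (ν.prod ν))
      = ∫⁻ q : (Fin d → ℝ) × (Fin d → ℝ), ∏ i, pE (s * q.1 i + s' * q.2 i) (g i)
        ∂(ν.prod ν) := by
    rw [lintegral_map hΦ hT]
    exact lintegral_congr fun q => Finset.prod_congr rfl fun i _ => by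
      simp [Pi.smul_apply, smul_eq_mul]
  rw [← hmap, hstable t ht0 ht1, ← hξint g]
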